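/- Let ρ > 0, n ∈ ℕ, and let r, r' ∈ EuclideanSpace ℝ (Fin 3) with r' ≠ 0, r ≠ r' and r ≠ −(ρ²/‖r'‖²)·r'. Set X = −1 + 2ρ²‖r − r'‖²/((‖r‖² + ρ²)(‖r'‖² + ρ²)), θ = arccos X, and A = √((‖r‖² + ρ²)(‖r'‖² + ρ²)) / (‖r − r'‖ · √(‖r‖²‖r'‖² + 2ρ²⟨r, r'⟩ + ρ⁴)). Define H : ℝ → ℝ by H(ν) = −(1/(2n+2)) · (ν − n − 1/2)(ν + n + 3/2) · (1/(4π cos(πν))) · A · sin((ν + 1/2)θ) for ν with cos(πν) ≠ 0, and H(n + 1/2) = (−1)ⁿ · A · sin((n+1)θ)/(4π²). Then H is differentiable at ν = n + 1/2 and its derivative there equals the generalized Green's function value (−1)ⁿ/(4π²) · A · ( cos((n+1)θ) · θ + sin((n+1)θ)/(2(n+1)) ). -/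

import Mathlib

open Real Filter Topology

-- |x - sin x| ≤ |x|^3/4 for |x| ≤ 1
lemma abs_sub_sin_le {x : ℝ} (hx : |x| ≤ 1) : |x - Real.sin x| ≤ |x| ^ 3 / 4 := by
  rcases lt_trichotomy x 0 with h | h | h
  · have hx1 : -x ≤ 1 := by rw [abs_of_neg h] at hx; linarith
    have h1 : Real.sin (-x) < -x := Real.sin_lt (by linarith)
    have h2 : -x - (-x) ^ 3 / 4 < Real.sin (-x) := by
      have h3 := Real.sin_gt_sub_cube (x := -x) (by linarith)
      have h4 := pow_pos (show (0:ℝ) < -x by linarith) 3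
      linarith
    rw [Real.sin_neg] at h1 h2
    rw [abs_of_neg h]
    rw [abs_of_nonpos (by nlinarith)]
    nlinarith
  · simp [h]
  · have hx1 : x ≤ 1 := by rwa [abs_of_pos h] at hx
    have h1 : Real.sin x < x := Real.sin_lt h
    have h2 : x - x ^ 3 / 4 < Real.sin x := by
      have h3 := Real.sin_gt_sub_cube h
      have h4 := pow_pos h 3
      linarith
    rw [abs_of_pos h, abs_of_pos (by linarith)]
    linarith

lemma abs_sin_ge {x : ℝ} (hx : |x| ≤ 1) : 3 / 4 * |x| ≤ |Real.sin x| := by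
  have h1 := abs_sub_sin_le hx
  have h2 : |x| - |x - Real.sin x| ≤ |Real.sin x| := by
    have h := abs_add_le (x - Real.sin x) (Real.sin x)
    simp only [sub_add_cancel] at h
    linarith
  have h3 : |x| ^ 3 ≤ |x| := by
    calc |x| ^ 3 ≤ |x| ^ 1 := pow_le_pow_of_le_one (abs_nonneg x) hx (by norm_num)
      _ = |x| := pow_one _
  linarith

noncomputable def psi (u : ℝ) : ℝ := if u = 0 then 1 / Real.pi else u / Real.sin (Real.pi * u)

lemma psi_hasDerivAt : HasDerivAt psi 0 0 := by
  rw [hasDerivAt_iff_tendsto_slope]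
  rw [tendsto_zero_iff_abs_tendsto_zero]
  apply squeeze_zero' (g := fun u => Real.pi / 3 * |u|)
  · exact Eventually.of_forall fun _ => abs_nonneg _
  · have hmem : Set.Ioo (-(1/Real.pi)) (1/Real.pi) ∈ 𝓝[≠] (0:ℝ) := by
      apply nhdsWithin_le_nhds
      exact Ioo_mem_nhds (neg_lt_zero.mpr (by positivity)) (by positivity)
    filter_upwards [hmem, self_mem_nhdsWithin] with u hu hu0
    simp only [Set.mem_compl_iff, Set.mem_singleton_iff] at hu0
    have hπ := Real.pi_pos
    have hu' : |u| < 1 / Real.pi := abs_lt.mpr ⟨hu.1, hu.2⟩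
    have hπu : |Real.pi * u| ≤ 1 := by
      rw [abs_mul, abs_of_pos hπ]
      rw [lt_div_iff₀ hπ] at hu'
      nlinarith [abs_nonneg u]
    have hs := abs_sin_ge hπu
    have hn := abs_sub_sin_le hπu
    have hsne : Real.sin (Real.pi * u) ≠ 0 := by
      intro h
      rw [h, abs_zero] at hs
      have : |Real.pi * u| = 0 := le_antisymm (by nlinarith [abs_nonneg (Real.pi * u)]) (abs_nonneg _)
      exact hu0 (by simpa [hπ.ne'] using abs_eq_zero.mp this)
    have hslope : slope psi 0 u = (Real.pi * u - Real.sin (Real.pi * u)) /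
        (Real.pi * u * Real.sin (Real.pi * u)) := by
      rw [slope_def_field, psi, psi, if_neg hu0, if_pos rfl]
      field_simp
      have hs' : Real.sin (u * Real.pi) ≠ 0 := by rwa [mul_comm] at hsne
      field_simp
      ring
    simp only [Function.comp_apply]
    rw [hslope, abs_div]
    rw [div_le_iff₀ (by positivity)]
    have hd : |Real.pi * u * Real.sin (Real.pi * u)| = |Real.pi * u| * |Real.sin (Real.pi * u)| :=
      abs_mul _ _
    have habs : (0:ℝ) < |u| := abs_pos.mpr hu0
    calc |Real.pi * u - Real.sin (Real.pi * u)| ≤ |Real.pi * u| ^ 3 / 4 := hn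
      _ ≤ Real.pi / 3 * |u| * |Real.pi * u * Real.sin (Real.pi * u)| := by
          rw [hd, abs_mul, abs_of_pos hπ]
          rw [abs_mul, abs_of_pos hπ] at hs
          nlinarith [mul_le_mul_of_nonneg_left hs
            (by positivity : (0:ℝ) ≤ Real.pi / 3 * |u| * (Real.pi * |u|)), abs_nonneg u]
  · have : Tendsto (fun u : ℝ => Real.pi / 3 * |u|) (𝓝 0) (𝓝 (Real.pi / 3 * |0|)) := by
      exact (continuous_const.mul continuous_abs).tendsto 0
    simpa using this.mono_left nhdsWithin_le_nhds


lemma alg_ne (m p S A s u f e : ℝ) (hm : m ≠ 0) (hp : p ≠ 0) (hS : S ≠ 0)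
    (he : e = 1 ∨ e = -1) :
    -(1 / m) * u * f * (1 / (4 * p * (-e * S))) * A * s
      = e / (4 * p * m) * A * (f * s * (u / S)) := by
  rcases he with h | h <;> subst h <;> (field_simp)

lemma alg_eq (p m A s e : ℝ) (hp : p ≠ 0) (hm : m ≠ 0) :
    e * A * s / (4 * p ^ 2) = e / (4 * p * m) * A * (m * s * (1 / p)) := by
  field_simp

lemma alg_der (p A c s t m e : ℝ) (hp : p ≠ 0) (hm : m ≠ 0) :
    e / (4 * p ^ 2) * A * (c * t + s / m)
      = e / (4 * p * m) * A * ((1 * s + m * (c * t)) * (1 / p) + m * s * 0) := by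
  field_simp
  ring

set_option maxHeartbeats 1000000 in
theorem generalized_fisheye_green_as_derivative
    (ρ : ℝ) (hρ : 0 < ρ) (n : ℕ)
    (r r' : EuclideanSpace ℝ (Fin 3)) (hr' : r' ≠ 0) (hne : r ≠ r')
    (him : r ≠ -(ρ ^ 2 / ‖r'‖ ^ 2) • r')
    (X θ A : ℝ)
    (hX : X = -1 + 2 * ρ ^ 2 * ‖r - r'‖ ^ 2
        / ((‖r‖ ^ 2 + ρ ^ 2) * (‖r'‖ ^ 2 + ρ ^ 2)))
    (hθ : θ = Real.arccos X)
    (hA : A = Real.sqrt ((‖r‖ ^ 2 + ρ ^ 2) * (‖r'‖ ^ 2 + ρ ^ 2))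
        / (‖r - r'‖
            * Real.sqrt (‖r‖ ^ 2 * ‖r'‖ ^ 2 + 2 * ρ ^ 2 * (inner ℝ r r' : ℝ) + ρ ^ 4)))
    (H : ℝ → ℝ)
    (hH : ∀ ν : ℝ, Real.cos (Real.pi * ν) ≠ 0 →
      H ν = -(1 / (2 * (n : ℝ) + 2)) * (ν - n - 1 / 2) * (ν + n + 3 / 2)
          * (1 / (4 * Real.pi * Real.cos (Real.pi * ν))) * A
          * Real.sin ((ν + 1 / 2) * θ))
    (hH' : H ((n : ℝ) + 1 / 2)
      = (-1 : ℝ) ^ n * A * Real.sin (((n : ℝ) + 1) * θ) / (4 * Real.pi ^ 2)) :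
    HasDerivAt H
      ((-1 : ℝ) ^ n / (4 * Real.pi ^ 2) * A
        * (Real.cos (((n : ℝ) + 1) * θ) * θ
            + Real.sin (((n : ℝ) + 1) * θ) / (2 * ((n : ℝ) + 1))))
      ((n : ℝ) + 1 / 2) := by
  have hπ := Real.pi_pos
  have h2n : (2 * (n : ℝ) + 2) ≠ 0 := by positivity
  -- trig facts
  have hcos0 : Real.cos (Real.pi * ((n : ℝ) + 1 / 2)) = 0 := by
    have h1 : Real.pi * ((n : ℝ) + 1 / 2) = (n : ℝ) * Real.pi + Real.pi / 2 := by ring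
    rw [h1, Real.cos_add, Real.cos_pi_div_two, Real.sin_pi_div_two, Real.sin_nat_mul_pi]
    ring
  have hsin0 : Real.sin (Real.pi * ((n : ℝ) + 1 / 2)) = (-1 : ℝ) ^ n := by
    have h1 : Real.pi * ((n : ℝ) + 1 / 2) = (n : ℝ) * Real.pi + Real.pi / 2 := by ring
    have h2 : Real.cos ((n : ℝ) * Real.pi) = (-1 : ℝ) ^ n := by
      simpa using Real.cos_nat_mul_pi_sub 0 n
    rw [h1, Real.sin_add, Real.cos_pi_div_two, Real.sin_pi_div_two,
      Real.sin_nat_mul_pi, h2]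
    ring
  have hcos : ∀ ν : ℝ, Real.cos (Real.pi * ν)
      = -(-1 : ℝ) ^ n * Real.sin (Real.pi * (ν - ((n : ℝ) + 1 / 2))) := by
    intro ν
    have h1 : Real.pi * ν
        = Real.pi * ((n : ℝ) + 1 / 2) + Real.pi * (ν - ((n : ℝ) + 1 / 2)) := by ring
    rw [h1, Real.cos_add, hcos0, hsin0]
    ring
  -- the smooth model function
  set C : ℝ := (-1 : ℝ) ^ n / (4 * Real.pi * (2 * (n : ℝ) + 2)) with hC
  -- derivative pieces at ν₀ = n + 1/2
  have hlin : HasDerivAt (fun ν : ℝ => ν + (n : ℝ) + 3 / 2) 1 ((n : ℝ) + 1 / 2) :=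
    ((hasDerivAt_id _).add_const ((n : ℝ))).add_const (3 / 2)
  have hinner : HasDerivAt (fun ν : ℝ => (ν + 1 / 2) * θ) θ ((n : ℝ) + 1 / 2) := by
    simpa using ((hasDerivAt_id ((n : ℝ) + 1 / 2)).add_const (1 / 2 : ℝ)).mul_const θ
  have hsin : HasDerivAt (fun ν : ℝ => Real.sin ((ν + 1 / 2) * θ))
      (Real.cos (((n : ℝ) + 1 / 2 + 1 / 2) * θ) * θ) ((n : ℝ) + 1 / 2) :=
    (Real.hasDerivAt_sin _).comp _ hinner
  have hshift : HasDerivAt (fun ν : ℝ => ν - ((n : ℝ) + 1 / 2)) 1 ((n : ℝ) + 1 / 2) :=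
    (hasDerivAt_id _).sub_const _
  have hpsi0 : HasDerivAt psi 0 (((n : ℝ) + 1 / 2) - ((n : ℝ) + 1 / 2)) := by
    rw [sub_self]; exact psi_hasDerivAt
  have hpsi : HasDerivAt (fun ν : ℝ => psi (ν - ((n : ℝ) + 1 / 2))) 0 ((n : ℝ) + 1 / 2) :=
    hpsi0.comp_sub_const _ _
  have hgD := (((hlin.mul hsin).mul hpsi).const_mul (C * A))
  -- the eventual equality
  have heq : H =ᶠ[nhds ((n : ℝ) + 1 / 2)]
      (fun ν : ℝ => C * A * ((ν + (n : ℝ) + 3 / 2) * Real.sin ((ν + 1 / 2) * θ)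
        * psi (ν - ((n : ℝ) + 1 / 2)))) := by
    have hmem : Set.Ioo ((n : ℝ) + 1 / 2 - 1) ((n : ℝ) + 1 / 2 + 1) ∈ nhds ((n : ℝ) + 1 / 2) :=
      Ioo_mem_nhds (by linarith) (by linarith)
    filter_upwards [hmem] with ν hν
    rcases eq_or_ne ν ((n : ℝ) + 1 / 2) with hveq | hvne
    · rw [hveq, hH']
      simp only [sub_self, psi, if_pos rfl]
      rw [show ((n : ℝ) + 1 / 2 + (n : ℝ) + 3 / 2) = 2 * (n : ℝ) + 2 by ring,
        show ((n : ℝ) + 1 / 2 + 1 / 2) * θ = ((n : ℝ) + 1) * θ by ring, hC]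
      exact alg_eq _ _ _ _ _ (ne_of_gt hπ) h2n
    · have hu0 : ν - ((n : ℝ) + 1 / 2) ≠ 0 := sub_ne_zero.mpr hvne
      have hu1 : |ν - ((n : ℝ) + 1 / 2)| < 1 := by
        rw [abs_lt]; exact ⟨by linarith [hν.1], by linarith [hν.2]⟩
      have hsinu : Real.sin (Real.pi * (ν - ((n : ℝ) + 1 / 2))) ≠ 0 := by
        rw [abs_lt] at hu1
        rcases hu0.lt_or_gt with h | h
        · have h1 : 0 < Real.sin (Real.pi * (((n : ℝ) + 1 / 2) - ν)) := by
            apply Real.sin_pos_of_pos_of_lt_pi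
            · nlinarith
            · nlinarith
          have h2 : Real.pi * (ν - ((n : ℝ) + 1 / 2))
              = -(Real.pi * (((n : ℝ) + 1 / 2) - ν)) := by ring
          rw [h2, Real.sin_neg]
          exact neg_ne_zero.mpr (ne_of_gt h1)
        · have h1 : 0 < Real.sin (Real.pi * (ν - ((n : ℝ) + 1 / 2))) := by
            apply Real.sin_pos_of_pos_of_lt_pi
            · nlinarith
            · nlinarith
          exact ne_of_gt h1
      have hpow : (-1 : ℝ) ^ n ≠ 0 := by
        rcases neg_one_pow_eq_or ℝ n with h | h <;> rw [h] <;> norm_num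
      have hcosne : Real.cos (Real.pi * ν) ≠ 0 := by
        rw [hcos ν]
        exact mul_ne_zero (neg_ne_zero.mpr hpow) hsinu
      rw [hH ν hcosne]
      simp only [psi, if_neg hu0]
      rw [hcos ν, hC, show ν - (n : ℝ) - 1 / 2 = ν - ((n : ℝ) + 1 / 2) by ring]
      exact alg_ne _ _ _ _ _ _ _ _ h2n (ne_of_gt hπ) hsinu (neg_one_pow_eq_or ℝ n)
  refine HasDerivAt.congr_of_eventuallyEq ?_ heq
  convert hgD using 1
  · rfl
  · rfl
  simp only [sub_self, psi, if_pos rfl, if_true, Pi.mul_apply]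
  rw [show ((n : ℝ) + 1 / 2 + (n : ℝ) + 3 / 2) = 2 * (n : ℝ) + 2 by ring,
    show ((n : ℝ) + 1 / 2 + 1 / 2) * θ = ((n : ℝ) + 1) * θ by ring, hC,
    show (2 : ℝ) * ((n : ℝ) + 1) = 2 * (n : ℝ) + 2 by ring]
  exact alg_der _ _ _ _ _ _ _ (ne_of_gt hπ) h2n
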